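/- arXiv:2211.00622 — 2 statements merged into one kernel-verified Lean document; each statement's English description precedes it below -/
import Mathlib

section
/- Let n be divisible by 4, and let G be the cubic bipartite graph with vertex set {x_i, y_i : i ∈ ℤ_n} and edges x_i y_{i-1}, x_i y_i, x_i y_{i+1} (indices mod n). Then the clique number of G² is 4 and χ(G²) = 4. -/
open SimpleGraph

/-- The square of a graph: vertices at distance at most 2 are adjacent. -/
def square {V : Type*} (G : SimpleGraph V) : SimpleGraph V where
  Adj u v := u ≠ v ∧ (G.Adj u v ∨ ∃ w, G.Adj u w ∧ G.Adj w v)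
  symm := ⟨by
    rintro u v ⟨h, h2 | ⟨w, hw1, hw2⟩⟩
    · exact ⟨h.symm, Or.inl h2.symm⟩
    · exact ⟨h.symm, Or.inr ⟨w, hw2.symm, hw1.symm⟩⟩⟩
  loopless := ⟨fun u h => h.1 rfl⟩

/-- The cubic bipartite graph on `{x_i} ⊕ {y_i}`, `i ∈ ZMod n`, with edges
`x_i y_{i-1}`, `x_i y_i`, `x_i y_{i+1}`. -/
def cubicGraphB (n : ℕ) : SimpleGraph (ZMod n ⊕ ZMod n) where
  Adj a b := match a, b with
    | .inl i, .inr j => j = i - 1 ∨ j = i ∨ j = i + 1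
    | .inr j, .inl i => j = i - 1 ∨ j = i ∨ j = i + 1
    | _, _ => False
  symm := ⟨by
    rintro (i | i) (j | j) h
    · exact h.elim
    · exact h
    · exact h
    · exact h.elim⟩
  loopless := ⟨by rintro (i | i) h <;> exact h⟩

lemma helper4 {n : ℕ} (h4 : 4 ∣ n) (i j : ZMod n)
    (h : j = i - 2 ∨ j = i - 1 ∨ j = i + 1 ∨ j = i + 2) :
    ZMod.castHom h4 (ZMod 4) i ≠ ZMod.castHom h4 (ZMod 4) j := by
  rcases h with rfl | rfl | rfl | rfl <;>
    simp only [map_sub, map_add, map_one, map_neg, map_ofNat, ne_eq, sub_eq_add_neg, add_assoc,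
      left_eq_add] <;> decide

lemma colorable4 {n : ℕ} (h4 : 4 ∣ n) : (square (cubicGraphB n)).Colorable 4 := by
  have C : (square (cubicGraphB n)).Coloring (ZMod 4) := by
    refine Coloring.mk
      (Sum.elim (fun i => ZMod.castHom h4 (ZMod 4) i) (fun i => ZMod.castHom h4 (ZMod 4) i + 2)) ?_
    rintro (i | i) (j | j) ⟨hne, h⟩ <;>
      simp only [Sum.elim_inl, Sum.elim_inr, ne_eq]
    · -- inl, inl
      rw [ne_eq, Sum.inl.injEq] at hne
      rcases h with hadj | ⟨(k | k), hw1, hw2⟩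
      · exact hadj.elim
      · exact hw1.elim
      · rcases hw1 with rfl | rfl | rfl <;> rcases hw2 with h2 | h2 | h2 <;>
          first
          | exact absurd (show _ = j by first | linear_combination h2 | linear_combination -h2) hne
          | refine helper4 h4 _ _ ?_
            first
            | exact Or.inl (by linear_combination h2)
            | exact Or.inl (by linear_combination -h2)
            | exact Or.inr (Or.inl (by linear_combination h2))
            | exact Or.inr (Or.inl (by linear_combination -h2))
            | exact Or.inr (Or.inr (Or.inl (by linear_combination h2)))
            | exact Or.inr (Or.inr (Or.inl (by linear_combination -h2)))
            | exact Or.inr (Or.inr (Or.inr (by linear_combination h2)))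
            | exact Or.inr (Or.inr (Or.inr (by linear_combination -h2)))
    · -- inl, inr
      rcases h with hadj | ⟨(k | k), hw1, hw2⟩
      · rcases hadj with rfl | rfl | rfl <;>
          simp only [map_sub, map_add, map_one, map_neg, map_ofNat, ne_eq, sub_eq_add_neg,
            add_assoc, left_eq_add] <;> decide
      · exact hw1.elim
      · exact hw2.elim
    · -- inr, inl
      rcases h with hadj | ⟨(k | k), hw1, hw2⟩
      · rcases hadj with rfl | rfl | rfl <;>
          simp only [map_sub, map_add, map_one, map_neg, map_ofNat, ne_eq, sub_eq_add_neg,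
            add_assoc, add_eq_left, left_eq_add] <;> decide
      · exact hw2.elim
      · exact hw1.elim
    · -- inr, inr
      rw [ne_eq, Sum.inr.injEq] at hne
      simp only [add_left_inj]
      rcases h with hadj | ⟨(k | k), hw1, hw2⟩
      · exact hadj.elim
      · rcases hw1 with rfl | rfl | rfl <;> rcases hw2 with h2 | h2 | h2 <;>
          first
          | exact absurd (show _ = j by first | linear_combination h2 | linear_combination -h2) hne
          | refine helper4 h4 _ _ ?_
            first
            | exact Or.inl (by linear_combination h2)
            | exact Or.inl (by linear_combination -h2)
            | exact Or.inr (Or.inl (by linear_combination h2))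
            | exact Or.inr (Or.inl (by linear_combination -h2))
            | exact Or.inr (Or.inr (Or.inl (by linear_combination h2)))
            | exact Or.inr (Or.inr (Or.inl (by linear_combination -h2)))
            | exact Or.inr (Or.inr (Or.inr (by linear_combination h2)))
            | exact Or.inr (Or.inr (Or.inr (by linear_combination -h2)))
      · exact hw2.elim
  simpa using C.colorable

lemma cliqueB {n : ℕ} (hn : 4 ≤ n) :
    (square (cubicGraphB n)).IsNClique 4 {Sum.inl 0, Sum.inl 1, Sum.inr 0, Sum.inr 1} := by
  haveI : Fact (1 < n) := ⟨by omega⟩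
  have h01 : (0 : ZMod n) ≠ 1 := zero_ne_one
  constructor
  · intro a ha b hb hab
    simp only [Finset.coe_insert, Set.mem_insert_iff, Finset.coe_singleton,
      Set.mem_singleton_iff] at ha hb
    rcases ha with rfl | rfl | rfl | rfl <;> rcases hb with rfl | rfl | rfl | rfl <;>
      first
      | exact absurd rfl hab
      | (refine ⟨hab, Or.inl ?_⟩; simp [cubicGraphB]; done)
      | (refine ⟨hab, Or.inr ⟨Sum.inr 0, ?_, ?_⟩⟩ <;> (simp [cubicGraphB]; done))
      | (refine ⟨hab, Or.inr ⟨Sum.inl 0, ?_, ?_⟩⟩ <;> (simp [cubicGraphB]; done))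
  · simp [h01, h01.symm]

/-- For `n` divisible by 4, the square of the graph has clique number 4 and
chromatic number 4. -/
theorem stmt3 (n : ℕ) (hn : 0 < n) (h4 : 4 ∣ n) :
    (square (cubicGraphB n)).cliqueNum = 4 ∧
    (square (cubicGraphB n)).chromaticNumber = 4 := by
  haveI : NeZero n := ⟨hn.ne'⟩
  have hn4 : 4 ≤ n := Nat.le_of_dvd hn h4
  have hcol := colorable4 h4
  have hcl := cliqueB (n := n) hn4
  constructor
  · refine le_antisymm ?_ ?_
    · obtain ⟨s, hs⟩ := (square (cubicGraphB n)).exists_isNClique_cliqueNum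
      exact hs.card_eq ▸ hs.isClique.card_le_of_colorable hcol
    · exact hcl.card_eq ▸ IsClique.card_le_cliqueNum (tc := hcl.isClique)
  · refine le_antisymm hcol.chromaticNumber_le ?_
    have := hcl.card_eq ▸ hcl.isClique.card_le_chromaticNumber
    exact_mod_cast this
end

section
/- Let G be the graph with vertex set {v_{i,j} : i,j ∈ {1,...,6}, i ≠ j} and edges v_{i,j} v_{j,i} for all i ≠ j, and v_{i,j} v_{i,j'} for all j ≠ j' both different from i (i.e., G = L(S(K₆))). Then G is a claw-free 5-regular graph of order 30 and its square G² satisfies χ(G²) = 6. -/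
open SimpleGraph

def lskAdj (n : ℕ) (a b : {p : Fin n × Fin n // p.1 ≠ p.2}) : Prop :=
  a ≠ b ∧ ((a.1.1 = b.1.2 ∧ a.1.2 = b.1.1) ∨ a.1.1 = b.1.1)

instance (n : ℕ) : DecidableRel (lskAdj n) := fun a b => by
  unfold lskAdj; infer_instance

/-- The line graph of the subdivision of `K_n`: vertices `v_{i,j}` (`i ≠ j`),
with edges `v_{i,j} v_{j,i}` and `v_{i,j} v_{i,j'}`. -/
def LSK (n : ℕ) : SimpleGraph {p : Fin n × Fin n // p.1 ≠ p.2} where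
  Adj := lskAdj n
  symm := ⟨by
    rintro a b ⟨hne, ⟨h1, h2⟩ | h1⟩
    · exact ⟨hne.symm, Or.inl ⟨h2.symm, h1.symm⟩⟩
    · exact ⟨hne.symm, Or.inr h1.symm⟩⟩
  loopless := ⟨fun a h => h.1 rfl⟩

instance (n : ℕ) : DecidableRel (LSK n).Adj :=
  inferInstanceAs (DecidableRel (lskAdj n))

/-- `G` is claw-free: no induced `K_{1,3}`. -/
def ClawFree {V : Type*} (G : SimpleGraph V) : Prop :=
  ∀ v a b c, G.Adj v a → G.Adj v b → G.Adj v c →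
    a ≠ b → a ≠ c → b ≠ c → G.Adj a b ∨ G.Adj a c ∨ G.Adj b c

lemma lsk_clawfree (n : ℕ) : ClawFree (LSK n) := by
  intro v a b c ha hb hc hab hac hbc
  have key : ∀ x y : {p : Fin n × Fin n // p.1 ≠ p.2},
      (v.1.1 = x.1.2 ∧ v.1.2 = x.1.1) → (v.1.1 = y.1.2 ∧ v.1.2 = y.1.1) → x = y := by
    rintro x y ⟨h1, h2⟩ ⟨h3, h4⟩
    exact Subtype.ext (Prod.ext (h2.symm.trans h4) (h1.symm.trans h3))
  rcases ha.2 with ha' | ha' <;> rcases hb.2 with hb' | hb' <;> rcases hc.2 with hc' | hc'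
  · exact absurd (key a b ha' hb') hab
  · exact absurd (key a b ha' hb') hab
  · exact absurd (key a c ha' hc') hac
  · exact Or.inr (Or.inr ⟨hbc, Or.inr (hb'.symm.trans hc')⟩)
  · exact absurd (key b c hb' hc') hbc
  · exact Or.inr (Or.inl ⟨hac, Or.inr (ha'.symm.trans hc')⟩)
  · exact Or.inl ⟨hab, Or.inr (ha'.symm.trans hb')⟩
  · exact Or.inl ⟨hab, Or.inr (ha'.symm.trans hb')⟩

instance {V : Type*} [DecidableEq V] [Fintype V] (G : SimpleGraph V) [DecidableRel G.Adj] :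
    DecidableRel (square G).Adj := fun u v =>
  inferInstanceAs (Decidable (u ≠ v ∧ (G.Adj u v ∨ ∃ w, G.Adj u w ∧ G.Adj w v)))

/-- `G = L(S(K₆))` is a claw-free 5-regular graph of order 30 with
`χ(G²) = 6`. -/
theorem stmt7 :
    ClawFree (LSK 6) ∧ (LSK 6).IsRegularOfDegree 5 ∧
    Fintype.card {p : Fin 6 × Fin 6 // p.1 ≠ p.2} = 30 ∧
    (square (LSK 6)).chromaticNumber = 6 := by
  refine ⟨lsk_clawfree 6, (by decide : ∀ v, (LSK 6).degree v = 5), by decide, ?_⟩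
  apply le_antisymm
  · have hcol : (square (LSK 6)).Colorable 6 := by
      refine ⟨⟨fun p => p.1.2, ?_⟩⟩
      intro p q hpq
      revert p q
      decide
    exact hcol.chromaticNumber_le
  · have hclq : (square (LSK 6)).IsClique
        ({⟨(0,1), by decide⟩, ⟨(0,2), by decide⟩, ⟨(0,3), by decide⟩,
          ⟨(0,4), by decide⟩, ⟨(0,5), by decide⟩, ⟨(1,0), by decide⟩} :
          Finset {p : Fin 6 × Fin 6 // p.1 ≠ p.2}) := by
      rw [isClique_iff]
      intro a ha b hb hne
      simp only [Finset.coe_insert, Set.mem_insert_iff, Finset.coe_singleton,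
        Set.mem_singleton_iff] at ha hb
      rcases ha with rfl|rfl|rfl|rfl|rfl|rfl <;> rcases hb with rfl|rfl|rfl|rfl|rfl|rfl <;>
        revert hne <;> decide
    have := hclq.card_le_chromaticNumber
    simpa using this
end
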